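/- Let X be a finite set with |X| = n, let m be a positive integer dividing n, and let F be a nonempty family of m-element subsets of X. Then there exists a partition of X into m blocks X_1, ..., X_m, each of cardinality n/m, such that the number of sets U ∈ F satisfying |U ∩ X_i| = 1 for every i ∈ [m] is at least (n/m)^m · |F| / C(n, m), and this quantity is strictly greater than |F|·e^{−m}. -/

import Mathlib

open Finset

variable {α : Type} [Fintype α] [DecidableEq α] {m k : ℕ}

/-- the blocks of the partition induced by an equivalence -/
def splitPB (m k : ℕ) (e : α ≃ Fin m × Fin k) (i : Fin m) : Finset α :=
  univ.filter (fun a => (e a).1 = i)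

lemma mem_splitPB {e : α ≃ Fin m × Fin k} {i : Fin m} {a : α} :
    a ∈ splitPB m k e i ↔ (e a).1 = i := by simp [splitPB]

lemma splitPB_disjoint (e : α ≃ Fin m × Fin k) {i j : Fin m} (h : i ≠ j) :
    Disjoint (splitPB m k e i) (splitPB m k e j) := by
  rw [Finset.disjoint_left]
  intro a ha hb
  exact h (mem_splitPB.1 ha ▸ (mem_splitPB.1 hb).symm ▸ rfl)

lemma splitPB_card (e : α ≃ Fin m × Fin k) (i : Fin m) :
    (splitPB m k e i).card = k := by
  classical
  have h1 : (splitPB m k e i).card = Fintype.card {a : α // (e a).1 = i} := by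
    rw [Fintype.card_subtype]; rfl
  rw [h1]
  have e2 : {a : α // (e a).1 = i} ≃ {p : Fin m × Fin k // p.1 = i} :=
    e.subtypeEquiv (fun a => Iff.rfl)
  have e3 : {p : Fin m × Fin k // p.1 = i} ≃ Fin k :=
    { toFun := fun p => p.1.2
      invFun := fun b => ⟨(i, b), rfl⟩
      left_inv := fun p => by
        rcases p with ⟨⟨x, y⟩, h⟩; cases h; rfl
      right_inv := fun b => rfl }
  rw [Fintype.card_congr (e2.trans e3), Fintype.card_fin]

lemma splitPB_biUnion (e : α ≃ Fin m × Fin k) :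
    univ.biUnion (splitPB m k e) = (univ : Finset α) := by
  ext a
  simp only [mem_biUnion, mem_univ, iff_true, true_and]
  exact ⟨(e a).1, mem_splitPB.2 rfl⟩

set_option linter.unusedSectionVars false

lemma splitTrans_card (e : α ≃ Fin m × Fin k) :
    (((univ : Finset α).powersetCard m).filter
      (fun U => ∀ i, (U ∩ splitPB m k e i).card = 1)).card = k ^ m := by
  classical
  have hinj : ∀ f : Fin m → Fin k, Function.Injective (fun i : Fin m => e.symm (i, f i)) := by
    intro f i j hij
    have := congrArg e hij
    simp only [Equiv.apply_symm_apply] at this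
    exact (Prod.mk.injEq _ _ _ _ ▸ this).1
  have key : (univ : Finset (Fin m → Fin k)).card =
      (((univ : Finset α).powersetCard m).filter
        (fun U => ∀ i, (U ∩ splitPB m k e i).card = 1)).card := by
    apply Finset.card_bij (fun f _ => Finset.image (fun i : Fin m => e.symm (i, f i)) univ)
    · intro f _
      rw [mem_filter]
      constructor
      · rw [mem_powersetCard]
        refine ⟨subset_univ _, ?_⟩
        rw [Finset.card_image_of_injective _ (hinj f), card_univ, Fintype.card_fin]
      · intro i
        have : Finset.image (fun i : Fin m => e.symm (i, f i)) univ ∩ splitPB m k e i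
            = {e.symm (i, f i)} := by
          ext a
          simp only [mem_inter, mem_image, mem_univ, true_and, mem_singleton, mem_splitPB]
          constructor
          · rintro ⟨⟨j, rfl⟩, h2⟩
            simp only [Equiv.apply_symm_apply] at h2
            subst h2; rfl
          · rintro rfl
            exact ⟨⟨i, rfl⟩, by simp⟩
        rw [this, card_singleton]
    · intro f _ g _ hfg
      funext i
      have h1 : e.symm (i, f i) ∈ Finset.image (fun j : Fin m => e.symm (j, g j)) univ := by
        rw [← hfg]; exact mem_image_of_mem _ (mem_univ i)
      rcases mem_image.1 h1 with ⟨j, _, hj⟩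
      have := congrArg e hj
      simp only [Equiv.apply_symm_apply] at this
      rcases Prod.mk.injEq _ _ _ _ ▸ this with ⟨h2, h3⟩
      cases h2; exact h3.symm
    · intro U hU
      rw [mem_filter] at hU
      obtain ⟨-, hU2⟩ := hU
      have ha : ∀ i, ∃ a, U ∩ splitPB m k e i = {a} := fun i => card_eq_one.1 (hU2 i)
      choose a haa using ha
      have haU : ∀ i, a i ∈ U := fun i => (mem_inter.1 (haa i ▸ mem_singleton_self (a i))).1
      have haP : ∀ i, (e (a i)).1 = i := fun i =>
        mem_splitPB.1 (mem_inter.1 (haa i ▸ mem_singleton_self (a i))).2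
      refine ⟨fun i => (e (a i)).2, mem_univ _, ?_⟩
      have hsymm : ∀ i, e.symm (i, (e (a i)).2) = a i := by
        intro i
        have h' : e (a i) = (i, (e (a i)).2) := by
          rw [Prod.ext_iff]; exact ⟨haP i, rfl⟩
        rw [← h', e.symm_apply_apply]
      ext u
      simp only [mem_image, mem_univ, true_and]
      constructor
      · rintro ⟨i, rfl⟩; rw [hsymm i]; exact haU i
      · intro hu
        refine ⟨(e u).1, ?_⟩
        have : u ∈ U ∩ splitPB m k e (e u).1 := mem_inter.2 ⟨hu, mem_splitPB.2 rfl⟩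
        rw [haa (e u).1, mem_singleton] at this
        rw [hsymm (e u).1, ← this]
  rw [← key, card_univ, Fintype.card_fun, Fintype.card_fin, Fintype.card_fin]

lemma splitN_eq {U V : Finset α} (h : U.card = V.card) :
    ((univ : Finset (α ≃ Fin m × Fin k)).filter
        (fun e => ∀ i, (U ∩ splitPB m k e i).card = 1)).card =
      ((univ : Finset (α ≃ Fin m × Fin k)).filter
        (fun e => ∀ i, (V ∩ splitPB m k e i).card = 1)).card := by
  classical
  have hUV : Fintype.card {x : α // x ∈ U} = Fintype.card {x : α // x ∈ V} := by
    simp [Fintype.card_coe, h]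
  have hUVc : Fintype.card {x : α // ¬ x ∈ U} = Fintype.card {x : α // ¬ x ∈ V} := by
    rw [Fintype.card_subtype_compl, Fintype.card_subtype_compl, hUV]
  set π : Equiv.Perm α :=
    Equiv.subtypeCongr (Fintype.equivOfCardEq hUV) (Fintype.equivOfCardEq hUVc) with hπdef
  have hπ : ∀ a : α, a ∈ U ↔ π a ∈ V := by
    intro a
    by_cases ha : a ∈ U
    · simp only [hπdef, Equiv.subtypeCongr, Equiv.trans_apply,
        Equiv.sumCompl_symm_apply_of_pos ha, Equiv.sumCongr_apply, Sum.map_inl,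
        Equiv.sumCompl_apply_inl]
      exact iff_of_true ha (Fintype.equivOfCardEq hUV ⟨a, ha⟩).2
    · simp only [hπdef, Equiv.subtypeCongr, Equiv.trans_apply,
        Equiv.sumCompl_symm_apply_of_neg ha, Equiv.sumCongr_apply, Sum.map_inr,
        Equiv.sumCompl_apply_inr]
      exact iff_of_false ha (Fintype.equivOfCardEq hUVc ⟨a, ha⟩).2
  have hcard : ∀ (e : α ≃ Fin m × Fin k) (i : Fin m),
      (U ∩ splitPB m k (π.trans e) i).card = (V ∩ splitPB m k e i).card := by
    intro e i
    apply Finset.card_bij (fun a _ => π a)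
    · intro a ha
      rw [mem_inter] at ha ⊢
      refine ⟨(hπ a).1 ha.1, ?_⟩
      have h2 := mem_splitPB.1 ha.2
      rw [Equiv.trans_apply] at h2
      exact mem_splitPB.2 h2
    · intro a _ b _ hab
      exact π.injective hab
    · intro b hb
      rw [mem_inter] at hb
      refine ⟨π.symm b, ?_, π.apply_symm_apply b⟩
      rw [mem_inter]
      constructor
      · rw [hπ (π.symm b), π.apply_symm_apply]; exact hb.1
      · rw [mem_splitPB]
        have : (e (π (π.symm b))).1 = i := by
          rw [π.apply_symm_apply]; exact mem_splitPB.1 hb.2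
        exact this
  refine (Finset.card_bij (fun (e : α ≃ Fin m × Fin k) _ => π.trans e) ?_ ?_ ?_).symm
  · intro e he
    rw [mem_filter] at he ⊢
    exact ⟨mem_univ _, fun i => (hcard e i).trans (he.2 i) ⟩
  · intro e _ e' _ hee
    have := congrArg (fun f => π.symm.trans f) hee
    simpa [← Equiv.trans_assoc] using this
  · intro e' he'
    rw [mem_filter] at he'
    refine ⟨π.symm.trans e', mem_filter.2 ⟨mem_univ _, ?_⟩, by simp [← Equiv.trans_assoc]⟩
    intro i
    rw [← hcard (π.symm.trans e') i]
    have : π.trans (π.symm.trans e') = e' := by simp [← Equiv.trans_assoc]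
    rw [this]
    exact he'.2 i

lemma splitSum (m k : ℕ) (A : Finset (Finset α)) :
    ∑ e ∈ (univ : Finset (α ≃ Fin m × Fin k)),
        (A.filter (fun U => ∀ i, (U ∩ splitPB m k e i).card = 1)).card =
      ∑ U ∈ A, ((univ : Finset (α ≃ Fin m × Fin k)).filter
        (fun e => ∀ i, (U ∩ splitPB m k e i).card = 1)).card := by
  simp only [Finset.card_filter]
  exact Finset.sum_comm

lemma factorial_gt_exp (m : ℕ) (hm : 0 < m) :
    Real.exp (-(m : ℝ)) < (m.factorial : ℝ) / (m : ℝ) ^ m := by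
  have hmpos : (0:ℝ) < (m : ℝ) ^ m := by positivity
  have hfpos : (0:ℝ) < (m.factorial : ℝ) := by
    exact_mod_cast m.factorial_pos
  have key : ((m : ℝ) ^ m) / (m.factorial : ℝ) < Real.exp (m : ℝ) := by
    have h2 : ∑ i ∈ Finset.range (m + 1), (m : ℝ) ^ i / (i.factorial : ℝ) ≤ Real.exp m :=
      Real.sum_le_exp_of_nonneg (by positivity) (m + 1)
    have h1 : ((m : ℝ) ^ m) / (m.factorial : ℝ) + 1 ≤
        ∑ i ∈ Finset.range (m + 1), (m : ℝ) ^ i / (i.factorial : ℝ) := by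
      rw [Finset.sum_range_succ]
      have h0 : (1:ℝ) ≤ ∑ i ∈ Finset.range m, (m : ℝ) ^ i / (i.factorial : ℝ) := by
        have := Finset.single_le_sum (f := fun i => (m : ℝ) ^ i / (i.factorial : ℝ))
          (fun i _ => by positivity) (Finset.mem_range.2 hm)
        simpa using this
      linarith
    linarith
  have hq : (0:ℝ) < ((m : ℝ) ^ m) / (m.factorial : ℝ) := by positivity
  rw [Real.exp_neg]
  calc (Real.exp (m:ℝ))⁻¹ < (((m : ℝ) ^ m) / (m.factorial : ℝ))⁻¹ := by
        exact (inv_lt_inv₀ (Real.exp_pos _) hq).2 key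
    _ = (m.factorial : ℝ) / (m : ℝ) ^ m := by
        rw [inv_div]

/-- If `m ∣ n = |X|` and `F` is a nonempty family of `m`-subsets
of `X`, then there is a partition of `X` into `m` blocks of size `n/m` such that
the number of `U ∈ F` that are transversals of the partition (`|U ∩ X_i| = 1` for
every block) is at least `(n/m)^m·|F|/C(n,m) > |F|·e^{-m}`. -/
theorem split_lemma (α : Type) [Fintype α] [DecidableEq α]
    (m : ℕ) (hm : 0 < m) (hdvd : m ∣ Fintype.card α)
    (F : Finset (Finset α)) (hne : F.Nonempty) (hF : ∀ U ∈ F, U.card = m) :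
    ∃ P : Fin m → Finset α,
      (∀ i j, i ≠ j → Disjoint (P i) (P j)) ∧
      (∀ i, (P i).card = Fintype.card α / m) ∧
      (Finset.univ.biUnion P = (Finset.univ : Finset α)) ∧
      ((Fintype.card α : ℝ) / (m : ℝ)) ^ m * (F.card : ℝ) /
          ((Fintype.card α).choose m : ℝ) ≤
        ((F.filter (fun U => ∀ i, (U ∩ P i).card = 1)).card : ℝ) ∧
      (F.card : ℝ) * Real.exp (-(m : ℝ)) <
        ((Fintype.card α : ℝ) / (m : ℝ)) ^ m * (F.card : ℝ) /
          ((Fintype.card α).choose m : ℝ) := by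
  classical
  obtain ⟨k, hk⟩ := hdvd
  set n := Fintype.card α with hn
  have hkdiv : n / m = k := by rw [hk, Nat.mul_div_cancel_left _ hm]
  obtain ⟨U₀, hU₀⟩ := hne
  have hU₀m : U₀.card = m := hF U₀ hU₀
  have hmn : m ≤ n := hU₀m ▸ U₀.card_le_univ
  have hkpos : 0 < k := by
    rcases Nat.eq_zero_or_pos k with h | h
    · exfalso; rw [h, Nat.mul_zero] at hk; omega
    · exact h
  -- the space of equivalences
  have hcardeq : Fintype.card α = Fintype.card (Fin m × Fin k) := by
    simp [hk, ← hn]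
  have hEne : ((univ : Finset (α ≃ Fin m × Fin k))).Nonempty :=
    ⟨Fintype.equivOfCardEq hcardeq, mem_univ _⟩
  set E := (univ : Finset (α ≃ Fin m × Fin k)) with hE
  set N : Finset α → ℕ := fun U =>
    (E.filter (fun e => ∀ i, (U ∩ splitPB m k e i).card = 1)).card with hN
  set c := N U₀ with hc
  have hNc : ∀ U : Finset α, U.card = m → N U = c := fun U hU =>
    splitN_eq (hU.trans hU₀m.symm)
  -- first double counting: over all m-subsets
  have key1 : n.choose m * c = E.card * k ^ m := by
    have h1 : ∑ e ∈ E, ((Finset.powersetCard m (univ : Finset α)).filter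
        (fun U => ∀ i, (U ∩ splitPB m k e i).card = 1)).card =
        ∑ U ∈ Finset.powersetCard m (univ : Finset α), N U := splitSum m k _
    have h2 : ∀ e ∈ E, ((Finset.powersetCard m (univ : Finset α)).filter
        (fun U => ∀ i, (U ∩ splitPB m k e i).card = 1)).card = k ^ m :=
      fun e _ => splitTrans_card e
    rw [Finset.sum_congr rfl h2, Finset.sum_const, smul_eq_mul] at h1
    have h3 : ∀ U ∈ Finset.powersetCard m (univ : Finset α), N U = c := by
      intro U hU
      exact hNc U (Finset.mem_powersetCard.1 hU).2
    rw [Finset.sum_congr rfl h3, Finset.sum_const, smul_eq_mul,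
      Finset.card_powersetCard, card_univ] at h1
    exact h1.symm
  -- second double counting: over F
  have key2 : ∑ e ∈ E, (F.filter (fun U => ∀ i, (U ∩ splitPB m k e i).card = 1)).card
      = F.card * c := by
    rw [splitSum m k F]
    have h3 : ∀ U ∈ F, N U = c := fun U hU => hNc U (hF U hU)
    rw [Finset.sum_congr rfl h3, Finset.sum_const, smul_eq_mul]
  -- averaging
  have havg : ∃ e ∈ E, ((F.card : ℝ) * c) / (E.card : ℝ) ≤
      ((F.filter (fun U => ∀ i, (U ∩ splitPB m k e i).card = 1)).card : ℝ) := by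
    apply Finset.exists_le_of_sum_le hEne
    have : ∑ e ∈ E, ((F.filter (fun U => ∀ i, (U ∩ splitPB m k e i).card = 1)).card : ℝ)
        = (F.card : ℝ) * c := by exact_mod_cast congrArg (Nat.cast : ℕ → ℝ) key2
    rw [this, Finset.sum_const, nsmul_eq_mul]
    have hE0 : (E.card : ℝ) ≠ 0 := by
      exact_mod_cast Finset.card_ne_zero_of_mem hEne.choose_spec
    exact le_of_eq (by rw [mul_div_assoc']; exact mul_div_cancel_left₀ _ hE0)
  obtain ⟨e, _, he⟩ := havg
  have hchoosepos : (0:ℝ) < (n.choose m : ℝ) := by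
    exact_mod_cast Nat.choose_pos hmn
  have hEpos : (0:ℝ) < (E.card : ℝ) := by
    exact_mod_cast Finset.card_pos.2 hEne
  have hnm : (n : ℝ) / (m : ℝ) = (k : ℝ) := by
    rw [hk]
    push_cast
    field_simp
  have hkey : (n.choose m : ℝ) * (c : ℝ) = (E.card : ℝ) * (k : ℝ) ^ m := by
    exact_mod_cast congrArg (Nat.cast : ℕ → ℝ) key1
  have hquot : ((n : ℝ) / (m : ℝ)) ^ m * (F.card : ℝ) / (n.choose m : ℝ)
      = ((F.card : ℝ) * c) / (E.card : ℝ) := by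
    rw [hnm]
    rw [div_eq_div_iff hchoosepos.ne' hEpos.ne']
    calc (k:ℝ) ^ m * (F.card : ℝ) * (E.card : ℝ)
        = (F.card : ℝ) * ((E.card : ℝ) * (k : ℝ) ^ m) := by ring
      _ = (F.card : ℝ) * ((n.choose m : ℝ) * (c : ℝ)) := by rw [hkey]
      _ = (F.card : ℝ) * c * (n.choose m : ℝ) := by ring
  have hFpos : (0:ℝ) < (F.card : ℝ) := by
    exact_mod_cast Finset.card_pos.2 ⟨U₀, hU₀⟩
  have hstep : Real.exp (-(m:ℝ)) < (k : ℝ) ^ m / (n.choose m : ℝ) := by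
    have h1 : (n.choose m : ℝ) ≤ (n : ℝ) ^ m / (m.factorial : ℝ) := by
      exact_mod_cast Nat.choose_le_pow_div m n
    have hnpow : (n : ℝ) ^ m = (m : ℝ) ^ m * (k : ℝ) ^ m := by
      rw [← mul_pow]; congr 1; exact_mod_cast hk
    have h2 : (m.factorial : ℝ) / (m : ℝ) ^ m ≤ (k : ℝ) ^ m / (n.choose m : ℝ) := by
      rw [div_le_div_iff₀ (by positivity) hchoosepos]
      calc (m.factorial : ℝ) * (n.choose m : ℝ)
          ≤ (m.factorial : ℝ) * ((n : ℝ) ^ m / (m.factorial : ℝ)) := by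
            apply mul_le_mul_of_nonneg_left h1 (by positivity)
        _ = (n : ℝ) ^ m := by
            field_simp
        _ = (k : ℝ) ^ m * (m : ℝ) ^ m := by rw [hnpow]; ring
    exact lt_of_lt_of_le (factorial_gt_exp m hm) h2
  refine ⟨splitPB m k e, fun i j hij => splitPB_disjoint e hij,
    fun i => by rw [splitPB_card, hkdiv], splitPB_biUnion e, ?_, ?_⟩
  · rw [hquot]; exact he
  · rw [hnm]
    calc (F.card : ℝ) * Real.exp (-(m:ℝ))
        < (F.card : ℝ) * ((k : ℝ) ^ m / (n.choose m : ℝ)) := by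
          exact mul_lt_mul_of_pos_left hstep hFpos
      _ = (k : ℝ) ^ m * (F.card : ℝ) / (n.choose m : ℝ) := by ring
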